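/- Let X_𝔻 = (X₁,X₂) be a 𝔻-random variable on a 𝔻-probabilistic space (Ω,Σ,P_𝔻) with X₁ P₁-integrable and X₂ P₂-integrable, let ℙ = {A_ι : ι ∈ ℕ} ⊂ Σ be a countable partition of Ω with P_𝔻(A_ι) ∈ 𝔻⁺ \ {(0,0)} for every ι, let 𝒜 = {A_{ι_n} : n ∈ ℕ} ⊆ ℙ be a subfamily, and put A = ∪_{n=1}^∞ A_{ι_n}. Then E_A(X_𝔻) · P_𝔻(A) = ∫_A X_𝔻 dP_𝔻 = P_𝔻(A) · Σ_{n=1}^∞ E_{A_{ι_n}}(X_𝔻) · P_𝔻(A_{ι_n}/A), where all products are componentwise in ℝ × ℝ and ∫_A Z_𝔻 dP_𝔻 = (∫_A Z₁ dP₁, ∫_A Z₂ dP₂). -/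

import Mathlib

open MeasureTheory

/-- One idempotent component of the hyperbolic conditional expectation `E_B(X_𝔻)`:
`cᵢ = (∫_B Xᵢ dPᵢ)/Pᵢ(B)` if `Pᵢ(B) > 0`, and `cᵢ = ∫_Ω Xᵢ dPᵢ` if `Pᵢ(B) = 0`. -/
noncomputable def hypCondExp {Ω : Type*} [MeasurableSpace Ω]
    (P : Measure Ω) (X : Ω → ℝ) (B : Set Ω) : ℝ :=
  if P B = 0 then ∫ w, X w ∂P else (∫ w in B, X w ∂P) / (P B).toReal

/-- One idempotent component of the hyperbolic conditional probability `P_𝔻(A/B)`: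
`qᵢ = Pᵢ(A ∩ B)/Pᵢ(B)` if `Pᵢ(B) > 0`, and `qᵢ = Pᵢ(A)` if `Pᵢ(B) = 0`. -/
noncomputable def hypCondProbAux {Ω : Type*} [MeasurableSpace Ω]
    (P : Measure Ω) (B A : Set Ω) : ℝ :=
  if P B = 0 then (P A).toReal else (P (A ∩ B)).toReal / (P B).toReal


lemma hypClaim1 {Ω : Type*} [MeasurableSpace Ω] (P : Measure Ω) [IsFiniteMeasure P]
    (X : Ω → ℝ) (S : Set Ω) :
    hypCondExp P X S * (P S).toReal = ∫ w in S, X w ∂P := by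
  unfold hypCondExp
  by_cases h : P S = 0
  · simp [h, setIntegral_measure_zero _ h]
  · rw [if_neg h, div_mul_cancel₀]
    exact ENNReal.toReal_ne_zero.mpr ⟨h, measure_ne_top _ _⟩

lemma hypKey {Ω : Type*} [MeasurableSpace Ω] (P : Measure Ω) [IsFiniteMeasure P]
    (X : Ω → ℝ) (hX : Integrable X P) (B : ℕ → Set Ω)
    (hB : ∀ n, MeasurableSet (B n)) (hdisj : Pairwise (Function.onFun Disjoint B)) :
    HasSum (fun n => hypCondExp P X (B n) * hypCondProbAux P (⋃ m, B m) (B n))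
      ((∫ w in ⋃ n, B n, X w ∂P) / (P (⋃ n, B n)).toReal) := by
  set U := ⋃ m, B m with hUdef
  by_cases hU : P U = 0
  · have h0 : ∀ n, hypCondProbAux P U (B n) = 0 := by
      intro n
      have : P (B n) = 0 :=
        measure_mono_null (Set.subset_iUnion B n) hU
      simp [hypCondProbAux, hU, this]
    have : (∫ w in U, X w ∂P) = 0 := setIntegral_measure_zero _ hU
    rw [this]
    simpa [h0] using hasSum_zero
  · have hterm : ∀ n, hypCondExp P X (B n) * hypCondProbAux P U (B n)
        = (∫ w in B n, X w ∂P) / (P U).toReal := by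
      intro n
      have hsub : B n ∩ U = B n := Set.inter_eq_left.mpr (Set.subset_iUnion B n)
      rw [hypCondProbAux, if_neg hU, hsub, mul_div_assoc', hypClaim1]
    have hsum : HasSum (fun n => ∫ w in B n, X w ∂P) (∫ w in ⋃ n, B n, X w ∂P) :=
      hasSum_integral_iUnion hB hdisj hX.integrableOn
    simpa [hterm] using hsum.div_const (P U).toReal

lemma hypComp2 {Ω : Type*} [MeasurableSpace Ω] (P : Measure Ω) [IsFiniteMeasure P]
    (X : Ω → ℝ) (U : Set Ω) :
    ∫ w in U, X w ∂P = (P U).toReal * ((∫ w in U, X w ∂P) / (P U).toReal) := by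
  by_cases h : P U = 0
  · simp [setIntegral_measure_zero _ h]
  · rw [mul_div_cancel₀]
    exact ENNReal.toReal_ne_zero.mpr ⟨h, measure_ne_top _ _⟩

/-- For a countable partition `ℙ = {A_ι}` of `Ω` with `P_𝔻(A_ι) ∈ 𝔻⁺ \ {(0,0)}` and a
sub-partition `𝒜 = {A_{ι_n}} ⊆ ℙ` with union `A`, one has
`E_A(X_𝔻) ⬝ P_𝔻(A) = ∫_A X_𝔻 dP_𝔻 = P_𝔻(A) ⬝ Σₙ E_{A_{ιₙ}}(X_𝔻) ⬝ P_𝔻(A_{ιₙ}/A)`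
(all products componentwise in `ℝ × ℝ`, integrals componentwise). -/
theorem condExp_subPartition {Ω : Type*} [MeasurableSpace Ω]
    (P₁ P₂ : Measure Ω) [IsFiniteMeasure P₁] [IsFiniteMeasure P₂]
    (hP : (P₁ Set.univ, P₂ Set.univ) ∈ ({(1, 1), (1, 0), (0, 1)} : Set (ENNReal × ENNReal)))
    (X₁ X₂ : Ω → ℝ)
    (hX : Measurable (fun w => (X₁ w, X₂ w)))
    (hX₁ : Integrable X₁ P₁) (hX₂ : Integrable X₂ P₂)
    (A : ℕ → Set Ω) (hAmeas : ∀ ι, MeasurableSet (A ι))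
    (hAdisj : Pairwise (Function.onFun Disjoint A))
    (hAcover : (⋃ ι, A ι) = Set.univ)
    (hApos : ∀ ι, ¬ (P₁ (A ι) = 0 ∧ P₂ (A ι) = 0))
    (ι : ℕ → ℕ) (hι : Function.Injective ι) :
    ((hypCondExp P₁ X₁ (⋃ n, A (ι n)), hypCondExp P₂ X₂ (⋃ n, A (ι n))) *
        ((P₁ (⋃ n, A (ι n))).toReal, (P₂ (⋃ n, A (ι n))).toReal) =
      (∫ w in ⋃ n, A (ι n), X₁ w ∂P₁, ∫ w in ⋃ n, A (ι n), X₂ w ∂P₂)) ∧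
    ((∫ w in ⋃ n, A (ι n), X₁ w ∂P₁, ∫ w in ⋃ n, A (ι n), X₂ w ∂P₂) =
      ((P₁ (⋃ n, A (ι n))).toReal, (P₂ (⋃ n, A (ι n))).toReal) *
        ∑' n, (hypCondExp P₁ X₁ (A (ι n)), hypCondExp P₂ X₂ (A (ι n))) *
          (hypCondProbAux P₁ (⋃ m, A (ι m)) (A (ι n)),
           hypCondProbAux P₂ (⋃ m, A (ι m)) (A (ι n)))) := by

  have hBdisj : Pairwise (Function.onFun Disjoint fun n => A (ι n)) :=
    fun m n hmn => hAdisj (hι.ne hmn)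
  have h₁ := hypKey P₁ X₁ hX₁ (fun n => A (ι n)) (fun n => hAmeas _) hBdisj
  have h₂ := hypKey P₂ X₂ hX₂ (fun n => A (ι n)) (fun n => hAmeas _) hBdisj
  constructor
  · exact Prod.ext (hypClaim1 P₁ X₁ _) (hypClaim1 P₂ X₂ _)
  · have htsum := (h₁.prodMk h₂).tsum_eq
    rw [show (fun n => (hypCondExp P₁ X₁ (A (ι n)), hypCondExp P₂ X₂ (A (ι n))) *
          (hypCondProbAux P₁ (⋃ m, A (ι m)) (A (ι n)),
           hypCondProbAux P₂ (⋃ m, A (ι m)) (A (ι n)))) =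
        (fun n => (hypCondExp P₁ X₁ (A (ι n)) * hypCondProbAux P₁ (⋃ m, A (ι m)) (A (ι n)),
           hypCondExp P₂ X₂ (A (ι n)) * hypCondProbAux P₂ (⋃ m, A (ι m)) (A (ι n)))) from rfl,
      htsum, Prod.mk_mul_mk]
    exact Prod.ext (hypComp2 P₁ X₁ _) (hypComp2 P₂ X₂ _)
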